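/- arXiv:2603.09537 — 3 statements merged into one kernel-verified Lean document; each statement's English description precedes it below -/
import Mathlib

section
/- Let A be an associative unital ℂ-algebra and q ∈ ℂ with q ≠ 0 and q² ≠ 1. Suppose E, F₁, F₂, K, K′ ∈ A satisfy: K·K′ = K′·K = 1, K·F₁ = q⁻²·F₁·K, K·F₂ = q·F₂·K, E·F₁ − F₁·E = (K − K′)/(q − q⁻¹), and E·F₂ = F₂·E. Then K′·E·(q·F₁F₂ − F₂F₁) − q·(q·F₁F₂ − F₂F₁)·K′·E = F₂. -/
theorem stmt13 (A : Type*) [Ring A] [Algebra ℂ A] (q : ℂ) (hq0 : q ≠ 0) (hq1 : q ^ 2 ≠ 1)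
    (E F₁ F₂ K K' : A)
    (hKK' : K * K' = 1) (hK'K : K' * K = 1)
    (hKF₁ : K * F₁ = (q ^ (-2 : ℤ)) • (F₁ * K))
    (hKF₂ : K * F₂ = q • (F₂ * K))
    (hEF₁ : E * F₁ - F₁ * E = (q - q⁻¹)⁻¹ • (K - K'))
    (hEF₂ : E * F₂ = F₂ * E) :
    K' * E * (q • (F₁ * F₂) - F₂ * F₁)
      - q • ((q • (F₁ * F₂) - F₂ * F₁) * (K' * E)) = F₂ := by
  have hq2 : (q : ℂ) ^ 2 ≠ 0 := pow_ne_zero 2 hq0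
  have hqq : q - q⁻¹ ≠ 0 := by
    intro h
    rw [sub_eq_zero] at h
    apply hq1
    rw [sq]
    nth_rewrite 2 [h]
    exact mul_inv_cancel₀ hq0
  set c : ℂ := (q - q⁻¹)⁻¹ with hc
  -- K' moves past F₁
  have e1 : F₁ * K' = (q ^ (-2 : ℤ)) • (K' * F₁) := by
    calc F₁ * K' = K' * (K * F₁) * K' := by rw [← mul_assoc, hK'K, one_mul]
    _ = K' * ((q ^ (-2 : ℤ)) • (F₁ * K)) * K' := by rw [hKF₁]
    _ = (q ^ (-2 : ℤ)) • (K' * F₁ * (K * K')) := by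
        simp [mul_smul_comm, smul_mul_assoc, mul_assoc]
    _ = (q ^ (-2 : ℤ)) • (K' * F₁) := by rw [hKK', mul_one]
  have hF1 : K' * F₁ = (q ^ 2) • (F₁ * K') := by
    rw [e1, smul_smul]
    have : q ^ 2 * q ^ (-2 : ℤ) = 1 := by
      rw [zpow_neg, ← zpow_natCast q 2]
      norm_num
      exact mul_inv_cancel₀ hq2
    rw [this, one_smul]
  have e2 : F₂ * K' = q • (K' * F₂) := by
    calc F₂ * K' = K' * (K * F₂) * K' := by rw [← mul_assoc, hK'K, one_mul]
    _ = K' * (q • (F₂ * K)) * K' := by rw [hKF₂]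
    _ = q • (K' * F₂ * (K * K')) := by
        simp [mul_smul_comm, smul_mul_assoc, mul_assoc]
    _ = q • (K' * F₂) := by rw [hKK', mul_one]
  have hF2 : K' * F₂ = q⁻¹ • (F₂ * K') := by
    rw [e2, smul_smul, inv_mul_cancel₀ hq0, one_smul]
  have hE1 : E * F₁ = F₁ * E + c • K - c • K' := by
    rw [sub_eq_iff_eq_add, smul_sub] at hEF₁
    rw [hEF₁]; abel
  -- parametrized versions
  have hF1x : ∀ x : A, K' * (F₁ * x) = (q ^ 2) • (F₁ * (K' * x)) := fun x => by
    rw [← mul_assoc, hF1, smul_mul_assoc, mul_assoc]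
  have hF2x : ∀ x : A, K' * (F₂ * x) = q⁻¹ • (F₂ * (K' * x)) := fun x => by
    rw [← mul_assoc, hF2, smul_mul_assoc, mul_assoc]
  have hE1x : ∀ x : A, E * (F₁ * x) = F₁ * (E * x) + c • (K * x) - c • (K' * x) := fun x => by
    rw [← mul_assoc, hE1, sub_mul, add_mul, smul_mul_assoc, smul_mul_assoc, mul_assoc]
  have hE2x : ∀ x : A, E * (F₂ * x) = F₂ * (E * x) := fun x => by
    rw [← mul_assoc, hEF₂, mul_assoc]
  have hK'Kx : ∀ x : A, K' * (K * x) = x := fun x => by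
    rw [← mul_assoc, hK'K, one_mul]
  simp only [mul_sub, sub_mul, mul_add, add_mul, smul_mul_assoc, mul_smul_comm, mul_assoc,
    hE1x, hE2x, hEF₂, hF1x, hF2x, hK'Kx, hF2, hF1, hE1, hK'K, mul_one, one_mul, smul_sub, smul_add,
    smul_smul]
  have key : q ^ 2 * (q - q⁻¹)⁻¹ - (q - q⁻¹)⁻¹ = q := by
    have h : q ^ 2 - 1 = q * (q - q⁻¹) := by field_simp
    calc q ^ 2 * (q - q⁻¹)⁻¹ - (q - q⁻¹)⁻¹ = (q ^ 2 - 1) * (q - q⁻¹)⁻¹ := by ring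
      _ = q * ((q - q⁻¹) * (q - q⁻¹)⁻¹) := by rw [h, mul_assoc]
      _ = q := by rw [mul_inv_cancel₀ hqq, mul_one]
  match_scalars
  all_goals try (field_simp; ring)
  all_goals (rw [hc]; linear_combination key)
end

section
/- Let q ∈ ℂ be nonzero. Let V be the ℂ-vector space with basis (v_{a,b})_{a,b ∈ ℕ}, and define ℂ-linear operators e₁ and e₂ on V by e₁·v_{a,b} = v_{a+1,b} and e₂·v_{a,b} = −q^{−a}·(a)_q·v_{a−1,b+1} (so in particular e₂·v_{0,b} = 0 since (0)_q = 0). Then e₁ and e₂ satisfy both quantum Serre relations: e₁²e₂ − (q + q⁻¹)e₁e₂e₁ + e₂e₁² = 0 and e₂²e₁ − (q + q⁻¹)e₂e₁e₂ + e₁e₂² = 0 as operators on V. -/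
noncomputable section

/-- The ℂ-vector space with basis `(v_{a,b})_{a,b ∈ ℕ}`, realized as the free ℂ-module on
`ℕ × ℕ`. -/
abbrev V : Type := (ℕ × ℕ) →₀ ℂ

/-- The basis vector `v_{a,b}`. -/
def v (a b : ℕ) : V := Finsupp.single (a, b) 1

/-- The q-integer `(a)_q = Σ_{s=0}^{a−1} q^{2s}`. -/
def qInt (q : ℂ) (a : ℕ) : ℂ := ∑ s ∈ Finset.range a, q ^ (2 * s)

lemma qInt_zero (q : ℂ) : qInt q 0 = 0 := by simp [qInt]

lemma qInt_succ (q : ℂ) (a : ℕ) : qInt q (a + 1) = qInt q a + q ^ (2 * a) := by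
  simp [qInt, Finset.sum_range_succ]

lemma ext_basis (f : V →ₗ[ℂ] V) (hf : ∀ a b : ℕ, f (v a b) = 0) : f = 0 := by
  apply Finsupp.lhom_ext
  rintro ⟨a, b⟩ c
  have h : (Finsupp.single (a, b) c : V) = c • v a b := by
    simp [v, Finsupp.smul_single]
  rw [h, map_smul, hf, smul_zero]
  simp

set_option maxHeartbeats 1000000 in
theorem stmt16 (q : ℂ) (hq : q ≠ 0) (e₁ e₂ : V →ₗ[ℂ] V)
    (he₁ : ∀ a b : ℕ, e₁ (v a b) = v (a + 1) b)
    (he₂ : ∀ a b : ℕ, e₂ (v a b) = (-((q ^ a)⁻¹ * qInt q a)) • v (a - 1) (b + 1)) :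
    e₁ ∘ₗ e₁ ∘ₗ e₂ - (q + q⁻¹) • (e₁ ∘ₗ e₂ ∘ₗ e₁) + e₂ ∘ₗ e₁ ∘ₗ e₁ = 0 ∧
      e₂ ∘ₗ e₂ ∘ₗ e₁ - (q + q⁻¹) • (e₂ ∘ₗ e₁ ∘ₗ e₂) + e₁ ∘ₗ e₂ ∘ₗ e₂ = 0 := by
  constructor
  · apply ext_basis
    intro a b
    match a with
    | 0 =>
      simp only [LinearMap.add_apply, LinearMap.sub_apply, LinearMap.smul_apply,
        LinearMap.comp_apply, he₁, he₂, map_smul, qInt_zero, qInt_succ, smul_smul]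
      norm_num
      simp only [← neg_smul, sub_eq_add_neg, ← add_smul]
      convert zero_smul ℂ (v 1 (b + 1))
      field_simp
      ring
    | n + 1 =>
      simp only [LinearMap.add_apply, LinearMap.sub_apply, LinearMap.smul_apply,
        LinearMap.comp_apply, he₁, he₂, map_smul, qInt_zero, smul_smul,
        Nat.add_sub_cancel, show n + 1 - 1 + 1 = n + 1 from rfl]
      simp only [← neg_smul, sub_eq_add_neg, ← add_smul,
        show n + 1 + 1 = n + 2 from rfl, show n + 1 + 1 + 1 - 1 = n + 2 from rfl]
      convert zero_smul ℂ (v (n + 2) (b + 1))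
      simp only [qInt_succ]
      field_simp
      ring
  · apply ext_basis
    intro a b
    match a with
    | 0 =>
      simp only [LinearMap.add_apply, LinearMap.sub_apply, LinearMap.smul_apply,
        LinearMap.comp_apply, he₁, he₂, map_smul, qInt_zero, qInt_succ, smul_smul]
      norm_num
      exact Or.inl (Or.inr (qInt_zero q))
    | 1 =>
      simp only [LinearMap.add_apply, LinearMap.sub_apply, LinearMap.smul_apply,
        LinearMap.comp_apply, he₁, he₂, map_smul, qInt_zero, qInt_succ, smul_smul]
      norm_num
      simp only [qInt_zero]
      norm_num
      simp only [← neg_smul, sub_eq_add_neg, ← add_smul]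
      convert zero_smul ℂ (v 0 (b + 1 + 1))
      field_simp
      ring
    | n + 2 =>
      simp only [LinearMap.add_apply, LinearMap.sub_apply, LinearMap.smul_apply,
        LinearMap.comp_apply, he₁, he₂, map_smul, smul_smul,
        show n + 2 - 1 = n + 1 from rfl, show n + 1 - 1 = n from rfl,
        show n + 2 + 1 - 1 = n + 2 from rfl, show n + 1 + 1 = n + 2 from rfl,
        show n + 1 + 1 - 1 = n + 1 from rfl, show n + 2 - 1 + 1 = n + 2 from rfl]
      simp only [← neg_smul, sub_eq_add_neg, ← add_smul]
      convert zero_smul ℂ (v (n + 1) (b + 1 + 1))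
      simp only [qInt_succ, two_mul, pow_add, mul_inv]
      have hc : q ^ n ≠ 0 := pow_ne_zero _ hq
      generalize qInt q n = A
      generalize q ^ n = c at hc ⊢
      ring_nf
      field_simp
      ring_nf

end
end

section
/- Let q ∈ ℂ with q ≠ 0 and q² ≠ 1. Let V be the ℂ-vector space with basis (v_{a,b})_{a,b ∈ ℕ}, and define ℂ-linear operators e₀ and e₂ on V by e₀·v_{a,b} = −q^{−a−2(b−1)}·((b)_q/(q − q⁻¹))·v_{a,b−1} (so e₀·v_{a,0} = 0) and e₂·v_{a,b} = −q^{−a}·(a)_q·v_{a−1,b+1} (so e₂·v_{0,b} = 0). Then e₀ and e₂ satisfy the quantum Serre relation e₀²e₂ − (q + q⁻¹)e₀e₂e₀ + e₂e₀² = 0 as operators on V. -/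
set_option maxHeartbeats 1000000


noncomputable section

theorem stmt18 (q : ℂ) (hq0 : q ≠ 0) (hq1 : q ^ 2 ≠ 1) (e₀ e₂ : V →ₗ[ℂ] V)
    (he₀ : ∀ a b : ℕ, e₀ (v a b) =
      (-(q ^ (-(a : ℤ) - 2 * ((b : ℤ) - 1)) * (qInt q b / (q - q⁻¹)))) • v a (b - 1))
    (he₂ : ∀ a b : ℕ, e₂ (v a b) = (-((q ^ a)⁻¹ * qInt q a)) • v (a - 1) (b + 1)) :
    e₀ ∘ₗ e₀ ∘ₗ e₂ - (q + q⁻¹) • (e₀ ∘ₗ e₂ ∘ₗ e₀) + e₂ ∘ₗ e₀ ∘ₗ e₀ = 0 := by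
  have hq2 : q ^ 2 - 1 ≠ 0 := sub_ne_zero.mpr hq1
  have hD : q - q⁻¹ ≠ 0 := by
    intro h
    apply hq2
    have h2 : q * (q - q⁻¹) = q ^ 2 - 1 := by field_simp
    rw [h, mul_zero] at h2
    exact h2.symm
  have hqInt : ∀ n : ℕ, qInt q n = ((q ^ 2) ^ n - 1) / (q ^ 2 - 1) := by
    intro n
    rw [qInt]
    simp_rw [pow_mul]
    exact geom_sum_eq hq1 n
  have hq00 : qInt q 0 = 0 := by simp [qInt]
  have hDval : q - q⁻¹ = (q ^ 2 - 1) / q := by field_simp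
  have hzn : ∀ (n : ℤ) (m : ℕ), n = -(m : ℤ) → q ^ n = (q ^ m)⁻¹ := by
    intro n m h
    rw [h, zpow_neg, zpow_natCast]
  refine Finsupp.lhom_ext fun p c => ?_
  obtain ⟨a, b⟩ := p
  have hsingle : Finsupp.single (a, b) c = c • v a b := by simp [v, Finsupp.smul_single]
  rw [hsingle, map_smul, map_smul]
  simp only [LinearMap.sub_apply, LinearMap.add_apply, LinearMap.smul_apply,
    LinearMap.comp_apply, LinearMap.zero_apply, he₀, he₂, map_smul, smul_smul]
  rcases a with _ | a
  · simp [qInt]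
  rcases b with _ | _ | b
  · simp [qInt]
  · -- b = 1
    norm_num [hq00]
    rw [hzn _ (a + 2) (by push_cast; ring), hzn _ (a + 1) (by push_cast; ring)]
    simp only [smul_smul, ← neg_smul, ← add_smul]
    refine smul_eq_zero_of_left ?_ _
    simp only [hqInt, hDval, pow_add, pow_mul, pow_one]
    have hA : q ^ a ≠ 0 := pow_ne_zero _ hq0
    generalize q ^ a = A at hA ⊢
    generalize (q ^ 2) ^ a = C
    have h23 : q⁻¹ ^ 2 = q * q⁻¹ ^ 3 := by
      field_simp
    ring_nf
    simp only [h23]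
    ring
  · -- b ≥ 2
    norm_num
    rw [hzn _ (a + 2 * b + 4) (by push_cast; ring), hzn _ (a + 2 * b + 2) (by push_cast; ring),
      hzn _ (a + 2 * b + 3) (by push_cast; ring), hzn _ (a + 2 * b + 1) (by push_cast; ring)]
    simp only [smul_smul, ← neg_smul, ← add_smul]
    refine smul_eq_zero_of_left ?_ _
    simp only [hqInt, hDval, pow_add, pow_mul, pow_one]
    have hA : q ^ a ≠ 0 := pow_ne_zero _ hq0
    have hB : (q ^ 2) ^ b ≠ 0 := pow_ne_zero _ (pow_ne_zero _ hq0)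
    generalize q ^ a = A at hA ⊢
    generalize (q ^ 2) ^ b = B at hB ⊢
    generalize (q ^ 2) ^ a = C
    have h57 : q⁻¹ ^ 5 = q ^ 2 * q⁻¹ ^ 7 := by
      field_simp
    have h67 : q⁻¹ ^ 6 = q * q⁻¹ ^ 7 := by
      field_simp
    ring_nf
    simp only [h57, h67]
    ring


end
end
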